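/- If two words u and v over {a,b,a⁻¹,b⁻¹} represent the same element of the Baumslag-Solitar group BS(m,n) = ⟨a,b | aᵐb = baⁿ⟩, then ψ(u) = ψ(v) and ‖u‖_{b⁻¹} = ‖v‖_{b⁻¹}; hence the map Φ(g) = (ψ(w), ‖w‖_{b⁻¹}) for any word w representing g is a well-defined function on BS(m,n). -/
import Mathlib

inductive Letter : Type
  | a | b | ainv | binv
deriving DecidableEq

def bExp (w : List Letter) : ℤ := (w.count Letter.b : ℤ) - (w.count Letter.binv : ℤ)

/-- ‖w‖_{b⁻¹} = |w|_{b⁻¹} − |w|_b. -/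
def binvExp (w : List Letter) : ℤ := (w.count Letter.binv : ℤ) - (w.count Letter.b : ℤ)

noncomputable def psiAux (m n : ℕ) : List Letter → ℝ
  | [] => 0
  | x :: w =>
    match x with
    | Letter.a    => psiAux m n w + ((m : ℝ) / n) ^ (bExp w.reverse)
    | Letter.ainv => psiAux m n w - ((m : ℝ) / n) ^ (bExp w.reverse)
    | _           => psiAux m n w

noncomputable def psi (m n : ℕ) (w : List Letter) : ℝ := psiAux m n w.reverse

inductive Gen : Type
  | a | b
deriving DecidableEq

/-- The Baumslag–Solitar group BS(m,n) = ⟨a, b | aᵐ b = b aⁿ⟩. -/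
abbrev BS (m n : ℕ) : Type :=
  PresentedGroup
    ({FreeGroup.of Gen.a ^ m * FreeGroup.of Gen.b * (FreeGroup.of Gen.a ^ n)⁻¹ *
        (FreeGroup.of Gen.b)⁻¹} : Set (FreeGroup Gen))

/-- Interpretation of a letter in BS(m,n). -/
def Letter.toBS (m n : ℕ) : Letter → BS m n
  | Letter.a    => PresentedGroup.of Gen.a
  | Letter.b    => PresentedGroup.of Gen.b
  | Letter.ainv => (PresentedGroup.of Gen.a)⁻¹
  | Letter.binv => (PresentedGroup.of Gen.b)⁻¹

/-- The element of BS(m,n) represented by a word. -/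
def wordToBS (m n : ℕ) (w : List Letter) : BS m n := (w.map (Letter.toBS m n)).prod

/-! ### Auxiliary model group -/

@[ext]
structure Model (m n : ℕ) where
  x : ℝ
  k : ℤ

namespace Model

noncomputable def r (m n : ℕ) : ℝ := (m : ℝ) / n

theorem r_ne_zero (m n : ℕ) [NeZero m] [NeZero n] : r m n ≠ 0 :=
  div_ne_zero (Nat.cast_ne_zero.2 (NeZero.ne m)) (Nat.cast_ne_zero.2 (NeZero.ne n))

noncomputable instance (m n : ℕ) [NeZero m] [NeZero n] : Group (Model m n) where
  mul p q := ⟨p.x + r m n ^ p.k * q.x, p.k + q.k⟩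
  one := ⟨0, 0⟩
  inv p := ⟨-(r m n ^ (-p.k) * p.x), -p.k⟩
  mul_assoc p q s := by
    ext
    · show (p.x + r m n ^ p.k * q.x) + r m n ^ (p.k + q.k) * s.x =
        p.x + r m n ^ p.k * (q.x + r m n ^ q.k * s.x)
      rw [zpow_add₀ (r_ne_zero m n)]; ring
    · show (p.k + q.k) + s.k = p.k + (q.k + s.k); ring
  one_mul p := by
    ext
    · show (0 : ℝ) + r m n ^ (0 : ℤ) * p.x = p.x; simp
    · show (0 : ℤ) + p.k = p.k; simp
  mul_one p := by
    ext
    · show p.x + r m n ^ p.k * 0 = p.x; simp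
    · show p.k + 0 = p.k; simp
  inv_mul_cancel p := by
    ext
    · show -(r m n ^ (-p.k) * p.x) + r m n ^ (-p.k) * p.x = 0; ring
    · show -p.k + p.k = 0; ring

variable (m n : ℕ) [NeZero m] [NeZero n]

theorem mul_def (p q : Model m n) : p * q = ⟨p.x + r m n ^ p.k * q.x, p.k + q.k⟩ := rfl
theorem one_def : (1 : Model m n) = ⟨0, 0⟩ := rfl
theorem inv_def (p : Model m n) : p⁻¹ = ⟨-(r m n ^ (-p.k) * p.x), -p.k⟩ := rfl

def fGen : Gen → Model m n
  | Gen.a => ⟨1, 0⟩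
  | Gen.b => ⟨0, 1⟩

theorem pow_a (j : ℕ) : (⟨1, 0⟩ : Model m n) ^ j = ⟨(j : ℝ), 0⟩ := by
  induction j with
  | zero => simp [one_def]
  | succ i ih => rw [pow_succ, ih, mul_def]; ext <;> simp

noncomputable def toModel : BS m n →* Model m n :=
  PresentedGroup.toGroup (f := fGen m n) (by
    intro rel hrel
    simp only [Set.mem_singleton_iff] at hrel
    subst hrel
    simp only [map_mul, map_pow, map_inv, FreeGroup.lift_apply_of]
    show (fGen m n Gen.a) ^ m * fGen m n Gen.b * ((fGen m n Gen.a) ^ n)⁻¹ *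
      (fGen m n Gen.b)⁻¹ = 1
    rw [show fGen m n Gen.a = (⟨1,0⟩ : Model m n) from rfl,
        show fGen m n Gen.b = (⟨0,1⟩ : Model m n) from rfl,
        pow_a, pow_a, inv_def, inv_def, mul_def, mul_def, mul_def, one_def]
    ext
    · show ((m:ℝ) + r m n ^ (0:ℤ) * 0 + r m n ^ ((0:ℤ)+1) * -(r m n ^ (-(0:ℤ)) * n)) +
        r m n ^ ((0:ℤ)+1+0) * -(r m n ^ (-(1:ℤ)) * 0) = 0
      have hn : (n : ℝ) ≠ 0 := Nat.cast_ne_zero.2 (NeZero.ne n)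
      simp [r, div_mul_eq_mul_div, mul_div_assoc, div_self hn]
    · show ((0:ℤ)+1+0) + -(1:ℤ) = 0; ring)

theorem toModel_of (g : Gen) : toModel m n (PresentedGroup.of g) = fGen m n g :=
  PresentedGroup.toGroup.of _

theorem key (w : List Letter) :
    toModel m n (wordToBS m n w) = ⟨psi m n w, bExp w⟩ := by
  induction w using List.reverseRecOn with
  | nil =>
    simp [wordToBS, psi, psiAux, bExp, map_one, one_def]
  | append_singleton w x ih =>
    have hw : wordToBS m n (w ++ [x]) = wordToBS m n w * x.toBS m n := by
      simp [wordToBS]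
    have hb : ∀ y : Letter, bExp (w ++ [y]) = bExp w +
        (if y = Letter.b then 1 else 0) - (if y = Letter.binv then 1 else 0) := by
      intro y
      simp only [bExp, List.count_append, List.count_singleton]
      cases y <;> simp <;> ring
    have hpsi : psi m n (w ++ [x]) = psiAux m n (x :: w.reverse) := by
      simp [psi]
    rw [hw, map_mul, ih]
    cases x
    · -- a
      rw [show Letter.a.toBS m n = PresentedGroup.of Gen.a from rfl, toModel_of]
      rw [show fGen m n Gen.a = (⟨1,0⟩ : Model m n) from rfl, mul_def]
      ext
      · show psi m n w + r m n ^ bExp w * 1 = psi m n (w ++ [Letter.a])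
        rw [hpsi]
        show psi m n w + r m n ^ bExp w * 1 = psiAux m n w.reverse + r m n ^ bExp w.reverse.reverse
        simp [psi, r]
      · show bExp w + 0 = bExp (w ++ [Letter.a])
        rw [hb]; simp
    · -- b
      rw [show Letter.b.toBS m n = PresentedGroup.of Gen.b from rfl, toModel_of]
      rw [show fGen m n Gen.b = (⟨0,1⟩ : Model m n) from rfl, mul_def]
      ext
      · show psi m n w + r m n ^ bExp w * 0 = psi m n (w ++ [Letter.b])
        rw [hpsi]
        show psi m n w + r m n ^ bExp w * 0 = psiAux m n w.reverse
        simp [psi]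
      · show bExp w + 1 = bExp (w ++ [Letter.b])
        rw [hb]; simp
    · -- ainv
      rw [show Letter.ainv.toBS m n = (PresentedGroup.of Gen.a)⁻¹ from rfl, map_inv, toModel_of]
      rw [show fGen m n Gen.a = (⟨1,0⟩ : Model m n) from rfl, inv_def, mul_def]
      ext
      · show psi m n w + r m n ^ bExp w * -(r m n ^ (-(0:ℤ)) * 1) = psi m n (w ++ [Letter.ainv])
        rw [hpsi]
        show psi m n w + r m n ^ bExp w * -(r m n ^ (-(0:ℤ)) * 1) =
          psiAux m n w.reverse - r m n ^ bExp w.reverse.reverse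
        simp [psi, r]; ring
      · show bExp w + -(0:ℤ) = bExp (w ++ [Letter.ainv])
        rw [hb]; simp
    · -- binv
      rw [show Letter.binv.toBS m n = (PresentedGroup.of Gen.b)⁻¹ from rfl, map_inv, toModel_of]
      rw [show fGen m n Gen.b = (⟨0,1⟩ : Model m n) from rfl, inv_def, mul_def]
      ext
      · show psi m n w + r m n ^ bExp w * -(r m n ^ (-(1:ℤ)) * 0) = psi m n (w ++ [Letter.binv])
        rw [hpsi]
        show psi m n w + r m n ^ bExp w * -(r m n ^ (-(1:ℤ)) * 0) = psiAux m n w.reverse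
        simp [psi]
      · show bExp w + -(1:ℤ) = bExp (w ++ [Letter.binv])
        rw [hb]; simp; omega

end Model

theorem phi_well_defined (m n : ℕ) (hm : 0 < m) (hn : 0 < n) (u v : List Letter)
    (h : wordToBS m n u = wordToBS m n v) :
    psi m n u = psi m n v ∧ binvExp u = binvExp v := by
  haveI : NeZero m := ⟨hm.ne'⟩
  haveI : NeZero n := ⟨hn.ne'⟩
  have hu := Model.key m n u
  have hv := Model.key m n v
  rw [h, hv] at hu
  have h1 : psi m n u = psi m n v := congrArg Model.x hu.symm
  have h2 : bExp u = bExp v := congrArg Model.k hu.symm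
  refine ⟨h1, ?_⟩
  simp only [binvExp, bExp] at h2 ⊢
  omega
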